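/- Let s ≥ 3 and N ≥ 1. Suppose φ : Σ_s → ℝ^N is bounded by some R > 0 and exponentially locally determined. Then the closure of the pointwise rotation set J_φ is a convex subset of ℝ^N. -/

import Mathlib

open Filter Topology

/-- The symbol space `Σ_s`: bi-infinite admissible sequences over an alphabet with
`s` symbols (represented by `Fin s`), i.e. `ξ_i ≠ ξ_{i+1}` for all `i ∈ ℤ`. -/
def SymbSpace (s : ℕ) : Type := {ξ : ℤ → Fin s // ∀ i : ℤ, ξ i ≠ ξ (i + 1)}

/-- The (left) shift map `σ : Σ_s → Σ_s`, `(σξ)_i = ξ_{i+1}`. -/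
def shift {s : ℕ} (ξ : SymbSpace s) : SymbSpace s :=
  ⟨fun i => ξ.1 (i + 1), fun i => ξ.2 (i + 1)⟩

/-- Birkhoff average `A_n(ξ) = (1/n) ∑_{i=0}^{n-1} φ(σ^i ξ)`. -/
noncomputable def birk {s N : ℕ} (φ : SymbSpace s → EuclideanSpace ℝ (Fin N))
    (n : ℕ) (ξ : SymbSpace s) : EuclideanSpace ℝ (Fin N) :=
  (n : ℝ)⁻¹ • ∑ i ∈ Finset.range n, φ (shift^[i] ξ)

/-- `ρ` is the rotation vector `ρ_φ(ξ)`, i.e. the limit of the Birkhoff averages exists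
and equals `ρ`. -/
def HasRotVec {s N : ℕ} (φ : SymbSpace s → EuclideanSpace ℝ (Fin N))
    (ξ : SymbSpace s) (ρ : EuclideanSpace ℝ (Fin N)) : Prop :=
  Tendsto (fun n => birk φ n ξ) atTop (nhds ρ)

/-- `φ` is exponentially locally determined: there are `C > 0` and `δ ∈ (0,1)` such that
whenever `ξ_j = ξ'_j` for all `-m ≤ j ≤ m'`, one has `‖φ(ξ) - φ(ξ')‖ ≤ C(δ^m + δ^{m'})`. -/
def ExpLocDet {s N : ℕ} (φ : SymbSpace s → EuclideanSpace ℝ (Fin N)) : Prop :=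
  ∃ C : ℝ, 0 < C ∧ ∃ δ : ℝ, 0 < δ ∧ δ < 1 ∧
    ∀ (m m' : ℕ) (ξ ξ' : SymbSpace s),
      (∀ j : ℤ, -(m : ℤ) ≤ j → j ≤ (m' : ℤ) → ξ.1 j = ξ'.1 j) →
      ‖φ ξ - φ ξ'‖ ≤ C * (δ ^ m + δ ^ m')

/-- The pointwise rotation set `J_φ`: all rotation vectors `ρ_φ(ξ)` that exist. -/
def PointwiseRot {s N : ℕ} (φ : SymbSpace s → EuclideanSpace ℝ (Fin N)) :
    Set (EuclideanSpace ℝ (Fin N)) :=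
  {ρ | ∃ ξ : SymbSpace s, HasRotVec φ ξ ρ}

/-! ### Auxiliary material -/

open Finset

section Aux

lemma shift_iter {s : ℕ} (ξ : SymbSpace s) (k : ℕ) (i : ℤ) :
    (shift^[k] ξ).1 i = ξ.1 (i + k) := by
  induction k generalizing ξ with
  | zero => simp
  | succ k ih =>
    rw [Function.iterate_succ_apply, ih (shift ξ)]
    show ξ.1 (i + k + 1) = _
    congr 1
    push_cast
    ring

lemma exists_third {s : ℕ} (hs : 3 ≤ s) (a b : Fin s) : ∃ c : Fin s, c ≠ a ∧ c ≠ b := by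
  by_contra h
  push_neg at h
  have hsub : (Finset.univ : Finset (Fin s)) ⊆ {a, b} := by
    intro c _
    by_cases hc : c = a
    · simp [hc]
    · simp [h c hc]
  have h1 := Finset.card_le_card hsub
  have h2 : ({a, b} : Finset (Fin s)).card ≤ 2 := Finset.card_insert_le _ _ |>.trans (by simp)
  simp [Finset.card_univ] at h1
  omega

lemma sum_shift_period {E : Type*} [AddCommGroup E] (f : ℕ → E) (P : ℕ)
    (hper : ∀ i, f (i + P) = f i) (a : ℕ) :
    ∑ j ∈ range P, f (a + j) = ∑ j ∈ range P, f j := by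
  induction a with
  | zero => simp
  | succ a ih =>
    have h1 : ∑ j ∈ range (P + 1), f (a + j) = (∑ j ∈ range P, f (a + j)) + f (a + P) :=
      Finset.sum_range_succ _ _
    have h2 : ∑ j ∈ range (P + 1), f (a + j) = f (a + 0) + ∑ j ∈ range P, f (a + (j + 1)) :=
      (Finset.sum_range_succ' _ _).trans (by rw [add_comm])
    have h3 : ∀ j, f (a + (j + 1)) = f (a + 1 + j) := by intro j; congr 1; omega
    simp only [h3] at h2
    have := h1.symm.trans h2
    rw [hper a] at this
    simp only [add_zero] at this
    rw [← ih]
    exact add_left_cancel (this.symm.trans (add_comm _ _))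

lemma sum_div_mod {E : Type*} [AddCommGroup E] (f : ℕ → E) (P : ℕ) (hP : 0 < P)
    (hper : ∀ i, f (i + P) = f i) (n : ℕ) :
    ∑ i ∈ range n, f i = (n / P) • (∑ j ∈ range P, f j) + ∑ i ∈ range (n % P), f i := by
  induction n using Nat.strong_induction_on with
  | _ n ih =>
    by_cases h : n < P
    · rw [Nat.div_eq_of_lt h, Nat.mod_eq_of_lt h, zero_smul, zero_add]
    · push_neg at h
      have hn : n = (n - P) + P := by omega
      rw [hn, Finset.sum_range_add, ih (n - P) (by omega),
        sum_shift_period f P hper (n - P)]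
      have hd : (n - P + P) / P = (n - P) / P + 1 := by rw [Nat.add_div_right _ hP]
      have hm : (n - P + P) % P = (n - P) % P := by simp [Nat.add_mod_right]
      rw [hd, hm, add_smul, one_smul]
      abel

lemma tendsto_avg_periodic {E : Type*} [NormedAddCommGroup E] [NormedSpace ℝ E]
    (f : ℕ → E) (P : ℕ) (hP : 0 < P) (hper : ∀ i, f (i + P) = f i)
    (B : ℝ) (hB : ∀ i, ‖f i‖ ≤ B) :
    Tendsto (fun n : ℕ => (n : ℝ)⁻¹ • ∑ i ∈ range n, f i) atTop
      (nhds ((P : ℝ)⁻¹ • ∑ j ∈ range P, f j)) := by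
  have hdm := sum_div_mod f P hP hper
  have hB0 : 0 ≤ B := le_trans (norm_nonneg _) (hB 0)
  rw [tendsto_iff_norm_sub_tendsto_zero]
  apply squeeze_zero' (g := fun n : ℕ => 2 * ((P : ℝ) * B) / n)
  · filter_upwards with n; positivity
  · filter_upwards [eventually_ge_atTop 1] with n hn
    have hn0 : (0:ℝ) < n := by exact_mod_cast hn
    have hPn : (0:ℝ) < P := by exact_mod_cast hP
    set Sp := ∑ j ∈ range P, f j with hSp
    have hSpn : ‖Sp‖ ≤ P * B := by
      calc ‖Sp‖ ≤ ∑ j ∈ range P, ‖f j‖ := norm_sum_le _ _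
        _ ≤ ∑ _j ∈ range P, B := Finset.sum_le_sum fun j _ => hB j
        _ = (P : ℝ) * B := by rw [Finset.sum_const, Finset.card_range, nsmul_eq_mul]
    have hrem : ‖∑ i ∈ range (n % P), f i‖ ≤ P * B := by
      calc ‖∑ i ∈ range (n % P), f i‖ ≤ ∑ i ∈ range (n % P), ‖f i‖ := norm_sum_le _ _
        _ ≤ ∑ _i ∈ range (n % P), B := Finset.sum_le_sum fun j _ => hB j
        _ = ((n % P : ℕ) : ℝ) * B := by rw [Finset.sum_const, Finset.card_range, nsmul_eq_mul]
        _ ≤ (P : ℝ) * B := by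
            apply mul_le_mul_of_nonneg_right _ hB0
            exact_mod_cast (Nat.mod_lt n hP).le
    set k := n / P with hk
    have key : (n:ℝ)⁻¹ • ∑ i ∈ range n, f i - (P:ℝ)⁻¹ • Sp
        = (((k : ℕ) : ℝ) * (n:ℝ)⁻¹ - (P:ℝ)⁻¹) • Sp
          + (n:ℝ)⁻¹ • ∑ i ∈ range (n % P), f i := by
      rw [hdm n]
      rw [smul_add, ← Nat.cast_smul_eq_nsmul ℝ, smul_smul, sub_smul]
      rw [mul_comm]
      abel
    rw [key]
    have hk1 : ((k:ℕ):ℝ) * (P:ℝ) ≤ n := by exact_mod_cast Nat.div_mul_le_self n P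
    have hk2 : (n:ℝ) < ((k:ℕ):ℝ) * P + P := by
      have h := Nat.mod_add_div n P
      have h2 := Nat.mod_lt n hP
      have h' : ((n % P : ℕ):ℝ) + (P:ℝ) * k = n := by exact_mod_cast h
      have h2' : ((n % P : ℕ):ℝ) < P := by exact_mod_cast h2
      nlinarith
    have hcoef : |((k:ℕ):ℝ) * (n:ℝ)⁻¹ - (P:ℝ)⁻¹| ≤ (n:ℝ)⁻¹ := by
      have e : ((k:ℕ):ℝ) * (n:ℝ)⁻¹ - (P:ℝ)⁻¹ = (((k:ℕ):ℝ) * P - n) / ((n:ℝ) * P) := by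
        field_simp
      rw [e, abs_div, abs_of_pos (mul_pos hn0 hPn), abs_of_nonpos (by linarith),
        div_le_iff₀ (mul_pos hn0 hPn)]
      have h5 : (n:ℝ)⁻¹ * ((n:ℝ) * P) = P := by field_simp
      rw [h5]; linarith
    calc ‖(((k:ℕ):ℝ) * (n:ℝ)⁻¹ - (P:ℝ)⁻¹) • Sp + (n:ℝ)⁻¹ • ∑ i ∈ range (n % P), f i‖
        ≤ ‖(((k:ℕ):ℝ) * (n:ℝ)⁻¹ - (P:ℝ)⁻¹) • Sp‖ + ‖(n:ℝ)⁻¹ • ∑ i ∈ range (n % P), f i‖ :=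
          norm_add_le _ _
      _ = |((k:ℕ):ℝ) * (n:ℝ)⁻¹ - (P:ℝ)⁻¹| * ‖Sp‖
          + |(n:ℝ)⁻¹| * ‖∑ i ∈ range (n % P), f i‖ := by rw [norm_smul, norm_smul]; rfl
      _ ≤ (n:ℝ)⁻¹ * ((P:ℝ) * B) + (n:ℝ)⁻¹ * ((P:ℝ) * B) := by
          have h1 : |((k:ℕ):ℝ) * (n:ℝ)⁻¹ - (P:ℝ)⁻¹| * ‖Sp‖ ≤ (n:ℝ)⁻¹ * ((P:ℝ) * B) :=
            mul_le_mul hcoef hSpn (norm_nonneg _) (by positivity)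
          have h2 : |(n:ℝ)⁻¹| * ‖∑ i ∈ range (n % P), f i‖ ≤ (n:ℝ)⁻¹ * ((P:ℝ) * B) := by
            rw [abs_of_pos (inv_pos.2 hn0)]
            exact mul_le_mul_of_nonneg_left hrem (by positivity)
          linarith
      _ = 2 * ((P:ℝ) * B) / n := by field_simp; ring
  · exact tendsto_const_div_atTop_nhds_zero_nat _

lemma geom_two_bound (δ : ℝ) (h0 : 0 < δ) (h1 : δ < 1) (n : ℕ) :
    ∑ i ∈ range n, (δ ^ i + δ ^ (n - 1 - i)) ≤ 2 * (1 - δ)⁻¹ := by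
  rw [Finset.sum_add_distrib, Finset.sum_range_reflect (fun i => δ ^ i) n]
  have hg : ∑ i ∈ range n, δ ^ i ≤ (1 - δ)⁻¹ := by
    rw [geom_sum_eq (ne_of_lt h1) n]
    rw [div_le_iff_of_neg (by linarith : δ - 1 < 0)]
    have : 0 ≤ δ ^ n := by positivity
    have hne : (1:ℝ) - δ ≠ 0 := by linarith
    have h2 : (1 - δ)⁻¹ * (δ - 1) = -1 := by rw [inv_mul_eq_div, div_eq_iff hne]; ring
    rw [h2]; linarith
  linarith

lemma norm_rotvec_le {s N : ℕ} (φ : SymbSpace s → EuclideanSpace ℝ (Fin N)) (R : ℝ)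
    (hbdd : ∀ ξ, ‖φ ξ‖ ≤ R) (ξ : SymbSpace s) (ρ : EuclideanSpace ℝ (Fin N))
    (h : HasRotVec φ ξ ρ) : ‖ρ‖ ≤ R := by
  have hcont : Tendsto (fun n => ‖birk φ n ξ‖) atTop (nhds ‖ρ‖) := h.norm
  apply le_of_tendsto hcont
  filter_upwards [eventually_ge_atTop 1] with n hn
  have hn0 : (0:ℝ) < n := by exact_mod_cast hn
  unfold birk
  rw [norm_smul]
  calc ‖(n:ℝ)⁻¹‖ * ‖∑ i ∈ range n, φ (shift^[i] ξ)‖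
      ≤ (n:ℝ)⁻¹ * ((n:ℝ) * R) := by
        apply mul_le_mul
        · rw [Real.norm_eq_abs, abs_of_pos (inv_pos.2 hn0)]
        · calc ‖∑ i ∈ range n, φ (shift^[i] ξ)‖ ≤ ∑ i ∈ range n, ‖φ (shift^[i] ξ)‖ :=
              norm_sum_le _ _
            _ ≤ ∑ _i ∈ range n, R := Finset.sum_le_sum fun i _ => hbdd _
            _ = (n:ℝ) * R := by rw [Finset.sum_const, Finset.card_range, nsmul_eq_mul]
        · exact norm_nonneg _
        · positivity
    _ = R := by field_simp

end Aux

/-- Periodic concatenation of an initial block of `ξ₁` of length `n₁`, a spacer `c₁`,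
a block of `ξ₂` of length `n₂`, and a spacer `c₂`. -/
def blockSeq {s : ℕ} (ξ₁ ξ₂ : SymbSpace s) (n₁ n₂ : ℕ) (c₁ c₂ : Fin s) (i : ℤ) : Fin s :=
  if i % ((n₁ : ℤ) + n₂ + 2) < (n₁ : ℤ) then ξ₁.1 (i % ((n₁ : ℤ) + n₂ + 2))
  else if i % ((n₁ : ℤ) + n₂ + 2) = (n₁ : ℤ) then c₁
  else if i % ((n₁ : ℤ) + n₂ + 2) < (n₁ : ℤ) + n₂ + 1 then
    ξ₂.1 (i % ((n₁ : ℤ) + n₂ + 2) - n₁ - 1)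
  else c₂

namespace blockSeq

variable {s : ℕ} (ξ₁ ξ₂ : SymbSpace s) (n₁ n₂ : ℕ) (c₁ c₂ : Fin s)

lemma period (i : ℤ) :
    blockSeq ξ₁ ξ₂ n₁ n₂ c₁ c₂ (i + ((n₁ : ℤ) + n₂ + 2)) = blockSeq ξ₁ ξ₂ n₁ n₂ c₁ c₂ i := by
  have h : (i + ((n₁ : ℤ) + n₂ + 2)) % ((n₁ : ℤ) + n₂ + 2) = i % ((n₁ : ℤ) + n₂ + 2) := by
    simpa using Int.add_mul_emod_self_left (a := i) (b := (n₁ : ℤ) + n₂ + 2) (c := 1)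
  simp only [blockSeq, h]

lemma eval₁ (i : ℤ) (h0 : 0 ≤ i) (h1 : i < (n₁ : ℤ)) :
    blockSeq ξ₁ ξ₂ n₁ n₂ c₁ c₂ i = ξ₁.1 i := by
  have hm : i % ((n₁ : ℤ) + n₂ + 2) = i := Int.emod_eq_of_lt h0 (by omega)
  simp only [blockSeq, hm, if_pos h1]

lemma eval₂ (i : ℤ) (h0 : (n₁ : ℤ) < i) (h1 : i < (n₁ : ℤ) + n₂ + 1) :
    blockSeq ξ₁ ξ₂ n₁ n₂ c₁ c₂ i = ξ₂.1 (i - n₁ - 1) := by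
  have hp : (0:ℤ) ≤ (n₁ : ℤ) := Int.natCast_nonneg _
  have hm : i % ((n₁ : ℤ) + n₂ + 2) = i := Int.emod_eq_of_lt (by omega) (by omega)
  show (if i % ((n₁ : ℤ) + n₂ + 2) < (n₁ : ℤ) then ξ₁.1 (i % ((n₁ : ℤ) + n₂ + 2))
    else if i % ((n₁ : ℤ) + n₂ + 2) = (n₁ : ℤ) then c₁
    else if i % ((n₁ : ℤ) + n₂ + 2) < (n₁ : ℤ) + n₂ + 1 then
      ξ₂.1 (i % ((n₁ : ℤ) + n₂ + 2) - n₁ - 1)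
    else c₂) = _
  rw [hm, if_neg (show ¬ i < (n₁:ℤ) by omega), if_neg (show ¬ i = (n₁:ℤ) by omega), if_pos h1]

lemma adm (hn₁ : 1 ≤ n₁) (hn₂ : 1 ≤ n₂)
    (hc₁a : c₁ ≠ ξ₁.1 ((n₁ : ℤ) - 1)) (hc₁b : c₁ ≠ ξ₂.1 0)
    (hc₂a : c₂ ≠ ξ₂.1 ((n₂ : ℤ) - 1)) (hc₂b : c₂ ≠ ξ₁.1 0) (i : ℤ) :
    blockSeq ξ₁ ξ₂ n₁ n₂ c₁ c₂ i ≠ blockSeq ξ₁ ξ₂ n₁ n₂ c₁ c₂ (i + 1) := by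
  set P : ℤ := (n₁ : ℤ) + n₂ + 2 with hP
  have hN1 : (1:ℤ) ≤ (n₁ : ℤ) := by exact_mod_cast hn₁
  have hN2 : (1:ℤ) ≤ (n₂ : ℤ) := by exact_mod_cast hn₂
  have hPpos : (0:ℤ) < P := by omega
  set r : ℤ := i % P with hr
  have h0 : 0 ≤ r := Int.emod_nonneg i hPpos.ne'
  have hlt : r < P := Int.emod_lt_of_pos i hPpos
  have hnext : (i + 1) % P = if r = P - 1 then 0 else r + 1 := by
    rw [Int.add_emod, ← hr]
    have h1 : (1:ℤ) % P = 1 := Int.emod_eq_of_lt (by norm_num) (by omega)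
    rw [h1]
    by_cases h : r = P - 1
    · rw [if_pos h, h]
      simp [show P - 1 + 1 = P by ring]
    · rw [if_neg h]
      exact Int.emod_eq_of_lt (by omega) (by omega)
  have hbi : ∀ j : ℤ, blockSeq ξ₁ ξ₂ n₁ n₂ c₁ c₂ j =
      if j % P < (n₁ : ℤ) then ξ₁.1 (j % P)
      else if j % P = (n₁ : ℤ) then c₁
      else if j % P < (n₁ : ℤ) + n₂ + 1 then ξ₂.1 (j % P - n₁ - 1)
      else c₂ := fun j => rfl
  rw [hbi i, hbi (i + 1), ← hr, hnext]
  rcases lt_trichotomy r ((n₁ : ℤ) - 1) with hc | hc | hc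
  · rw [if_neg (show ¬ r = P - 1 by omega), if_pos (show r < (n₁:ℤ) by omega),
      if_pos (show r + 1 < (n₁:ℤ) by omega)]
    exact ξ₁.2 r
  · rw [if_neg (show ¬ r = P - 1 by omega), if_pos (show r < (n₁:ℤ) by omega),
      if_neg (show ¬ r + 1 < (n₁:ℤ) by omega), if_pos (show r + 1 = (n₁:ℤ) by omega), hc]
    exact Ne.symm hc₁a
  · rcases lt_trichotomy r ((n₁ : ℤ)) with hd | hd | hd
    · omega
    · rw [if_neg (show ¬ r = P - 1 by omega), if_neg (show ¬ r < (n₁:ℤ) by omega),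
        if_pos hd, if_neg (show ¬ r + 1 < (n₁:ℤ) by omega),
        if_neg (show ¬ r + 1 = (n₁:ℤ) by omega),
        if_pos (show r + 1 < (n₁:ℤ) + n₂ + 1 by omega)]
      rw [show r + 1 - (n₁:ℤ) - 1 = 0 by omega]
      exact hc₁b
    · rcases lt_trichotomy r ((n₁ : ℤ) + n₂) with he | he | he
      · rw [if_neg (show ¬ r = P - 1 by omega), if_neg (show ¬ r < (n₁:ℤ) by omega),
          if_neg (show ¬ r = (n₁:ℤ) by omega),
          if_pos (show r < (n₁:ℤ) + n₂ + 1 by omega),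
          if_neg (show ¬ r + 1 < (n₁:ℤ) by omega),
          if_neg (show ¬ r + 1 = (n₁:ℤ) by omega),
          if_pos (show r + 1 < (n₁:ℤ) + n₂ + 1 by omega)]
        rw [show r + 1 - (n₁:ℤ) - 1 = r - n₁ - 1 + 1 by ring]
        exact ξ₂.2 (r - n₁ - 1)
      · rw [if_neg (show ¬ r = P - 1 by omega), if_neg (show ¬ r < (n₁:ℤ) by omega),
          if_neg (show ¬ r = (n₁:ℤ) by omega),
          if_pos (show r < (n₁:ℤ) + n₂ + 1 by omega),
          if_neg (show ¬ r + 1 < (n₁:ℤ) by omega),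
          if_neg (show ¬ r + 1 = (n₁:ℤ) by omega),
          if_neg (show ¬ r + 1 < (n₁:ℤ) + n₂ + 1 by omega)]
        rw [show r - (n₁:ℤ) - 1 = (n₂:ℤ) - 1 by omega]
        exact Ne.symm hc₂a
      · have hre : r = P - 1 := by omega
        rw [if_pos hre, if_neg (show ¬ r < (n₁:ℤ) by omega),
          if_neg (show ¬ r = (n₁:ℤ) by omega),
          if_neg (show ¬ r < (n₁:ℤ) + n₂ + 1 by omega),
          if_pos (show (0:ℤ) < (n₁:ℤ) by omega)]
        exact hc₂b

end blockSeq


set_option maxHeartbeats 1600000 in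
lemma combo_mem_closure {s N : ℕ} (hs : 3 ≤ s)
    (φ : SymbSpace s → EuclideanSpace ℝ (Fin N)) (R : ℝ) (hR : 0 < R)
    (hbdd : ∀ ξ, ‖φ ξ‖ ≤ R) (hloc : ExpLocDet φ)
    (ξ₁ ξ₂ : SymbSpace s) (ρ₁ ρ₂ : EuclideanSpace ℝ (Fin N))
    (h₁ : HasRotVec φ ξ₁ ρ₁) (h₂ : HasRotVec φ ξ₂ ρ₂)
    (p q : ℕ) (hp : 1 ≤ p) (hq : 1 ≤ q) :
    ((p : ℝ) / (p + q)) • ρ₁ + ((q : ℝ) / (p + q)) • ρ₂ ∈ closure (PointwiseRot φ) := by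
  obtain ⟨C, hC, δ, hδ0, hδ1, hφ⟩ := hloc
  have h1δ : (0:ℝ) < 1 - δ := by linarith
  rw [Metric.mem_closure_iff]
  intro ε hε
  have hK0 : (0:ℝ) < 2 * R + 4 * C * (1 - δ)⁻¹ := by
    have i1 := inv_pos.2 h1δ
    have i2 : 0 < 4 * C * (1 - δ)⁻¹ := by positivity
    linarith
  set K : ℝ := 2 * R + 4 * C * (1 - δ)⁻¹ with hK
  obtain ⟨M₁, hM₁⟩ := Metric.tendsto_atTop.1 h₁ (ε / 8) (by linarith)
  obtain ⟨M₂, hM₂⟩ := Metric.tendsto_atTop.1 h₂ (ε / 8) (by linarith)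
  set M₃ : ℕ := ⌈(4 * R + K) * 8 / ε⌉₊ with hM₃
  set M : ℕ := max (max M₁ M₂) M₃ + 1 with hMdef
  have hM1 : 1 ≤ M := by omega
  set n₁ : ℕ := p * M with hn₁def
  set n₂ : ℕ := q * M with hn₂def
  set P : ℕ := n₁ + 1 + n₂ + 1 with hPdef
  have hMn₁ : M ≤ n₁ := Nat.le_mul_of_pos_left M hp
  have hMn₂ : M ≤ n₂ := Nat.le_mul_of_pos_left M hq
  have hn₁1 : 1 ≤ n₁ := le_trans hM1 hMn₁
  have hn₂1 : 1 ≤ n₂ := le_trans hM1 hMn₂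
  have hPpos : 0 < P := by omega
  have hPr : (0:ℝ) < P := by exact_mod_cast hPpos
  have hpq : (0:ℝ) < (p:ℝ) + q := by positivity
  obtain ⟨c₁, hc₁a, hc₁b⟩ := exists_third hs (ξ₁.1 ((n₁ : ℤ) - 1)) (ξ₂.1 0)
  obtain ⟨c₂, hc₂a, hc₂b⟩ := exists_third hs (ξ₂.1 ((n₂ : ℤ) - 1)) (ξ₁.1 0)
  set η : SymbSpace s := ⟨blockSeq ξ₁ ξ₂ n₁ n₂ c₁ c₂,
    blockSeq.adm ξ₁ ξ₂ n₁ n₂ c₁ c₂ hn₁1 hn₂1 hc₁a hc₁b hc₂a hc₂b⟩ with hηdef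
  have hcast : ((P : ℕ) : ℤ) = (n₁ : ℤ) + n₂ + 2 := by
    rw [hPdef]; push_cast; ring
  have hηper : ∀ i : ℕ, φ (shift^[i + P] η) = φ (shift^[i] η) := by
    intro i
    have hsp : shift^[P] η = η := by
      apply Subtype.ext
      funext j
      rw [shift_iter]
      show blockSeq ξ₁ ξ₂ n₁ n₂ c₁ c₂ (j + (P:ℤ)) = blockSeq ξ₁ ξ₂ n₁ n₂ c₁ c₂ j
      rw [hcast]
      exact blockSeq.period ξ₁ ξ₂ n₁ n₂ c₁ c₂ j
    rw [Function.iterate_add_apply, hsp]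
  set f : ℕ → EuclideanSpace ℝ (Fin N) := fun i => φ (shift^[i] η) with hf
  set S : EuclideanSpace ℝ (Fin N) := ∑ i ∈ Finset.range P, f i with hS
  have hηrot : HasRotVec φ η ((P:ℝ)⁻¹ • S) := by
    unfold HasRotVec birk
    exact tendsto_avg_periodic f P hPpos hηper R (fun i => hbdd _)
  refine ⟨(P:ℝ)⁻¹ • S, ⟨η, hηrot⟩, ?_⟩
  set A₁ : EuclideanSpace ℝ (Fin N) := birk φ n₁ ξ₁ with hA₁def
  set A₂ : EuclideanSpace ℝ (Fin N) := birk φ n₂ ξ₂ with hA₂def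
  set T₁ : EuclideanSpace ℝ (Fin N) := ∑ i ∈ Finset.range n₁, φ (shift^[i] ξ₁) with hT₁
  set T₂ : EuclideanSpace ℝ (Fin N) := ∑ i ∈ Finset.range n₂, φ (shift^[i] ξ₂) with hT₂
  have hA₁T : (n₁:ℝ) • A₁ = T₁ := by
    rw [hA₁def]
    show (n₁:ℝ) • ((n₁:ℝ)⁻¹ • T₁) = T₁
    rw [smul_inv_smul₀ (Nat.cast_ne_zero.mpr (by omega) : (n₁:ℝ) ≠ 0)]
  have hA₂T : (n₂:ℝ) • A₂ = T₂ := by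
    rw [hA₂def]
    show (n₂:ℝ) • ((n₂:ℝ)⁻¹ • T₂) = T₂
    rw [smul_inv_smul₀ (Nat.cast_ne_zero.mpr (by omega) : (n₂:ℝ) ≠ 0)]
  -- block estimates
  have hblock₁ : ∀ i, i < n₁ → ‖f i - φ (shift^[i] ξ₁)‖ ≤ C * (δ ^ i + δ ^ (n₁ - 1 - i)) := by
    intro i hi
    apply hφ i (n₁ - 1 - i)
    intro j hj1 hj2
    rw [shift_iter, shift_iter]
    show blockSeq ξ₁ ξ₂ n₁ n₂ c₁ c₂ (j + (i:ℤ)) = ξ₁.1 (j + (i:ℤ))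
    exact blockSeq.eval₁ ξ₁ ξ₂ n₁ n₂ c₁ c₂ _ (by omega) (by omega)
  have hblock₂ : ∀ j, j < n₂ →
      ‖f (n₁ + 1 + j) - φ (shift^[j] ξ₂)‖ ≤ C * (δ ^ j + δ ^ (n₂ - 1 - j)) := by
    intro j hj
    apply hφ j (n₂ - 1 - j)
    intro k hk1 hk2
    rw [shift_iter, shift_iter]
    show blockSeq ξ₁ ξ₂ n₁ n₂ c₁ c₂ (k + ((n₁ + 1 + j : ℕ) : ℤ)) = ξ₂.1 (k + (j:ℤ))
    rw [blockSeq.eval₂ ξ₁ ξ₂ n₁ n₂ c₁ c₂ _ (by push_cast; omega) (by push_cast; omega)]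
    congr 1
    push_cast
    ring
  -- sum splitting
  have hsplit : S = (∑ i ∈ Finset.range n₁, f i) + f n₁
      + (∑ j ∈ Finset.range n₂, f (n₁ + 1 + j)) + f (n₁ + 1 + n₂) := by
    rw [hS, hPdef, Finset.sum_range_succ, Finset.sum_range_add, Finset.sum_range_succ]
  have hgeom₁ : ∑ i ∈ Finset.range n₁, (δ ^ i + δ ^ (n₁ - 1 - i)) ≤ 2 * (1 - δ)⁻¹ :=
    geom_two_bound δ hδ0 hδ1 n₁
  have hgeom₂ : ∑ i ∈ Finset.range n₂, (δ ^ i + δ ^ (n₂ - 1 - i)) ≤ 2 * (1 - δ)⁻¹ :=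
    geom_two_bound δ hδ0 hδ1 n₂
  have hEnorm : ‖S - T₁ - T₂‖ ≤ K := by
    have e : S - T₁ - T₂ = (∑ i ∈ Finset.range n₁, (f i - φ (shift^[i] ξ₁)))
        + (∑ j ∈ Finset.range n₂, (f (n₁ + 1 + j) - φ (shift^[j] ξ₂)))
        + f n₁ + f (n₁ + 1 + n₂) := by
      rw [hsplit, Finset.sum_sub_distrib, Finset.sum_sub_distrib, hT₁, hT₂]
      abel
    rw [e]
    have b₁ : ‖∑ i ∈ Finset.range n₁, (f i - φ (shift^[i] ξ₁))‖ ≤ C * (2 * (1 - δ)⁻¹) := by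
      calc ‖∑ i ∈ Finset.range n₁, (f i - φ (shift^[i] ξ₁))‖
          ≤ ∑ i ∈ Finset.range n₁, ‖f i - φ (shift^[i] ξ₁)‖ := norm_sum_le _ _
        _ ≤ ∑ i ∈ Finset.range n₁, C * (δ ^ i + δ ^ (n₁ - 1 - i)) :=
            Finset.sum_le_sum fun i hi => hblock₁ i (Finset.mem_range.mp hi)
        _ = C * ∑ i ∈ Finset.range n₁, (δ ^ i + δ ^ (n₁ - 1 - i)) := by rw [Finset.mul_sum]
        _ ≤ C * (2 * (1 - δ)⁻¹) := mul_le_mul_of_nonneg_left hgeom₁ hC.le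
    have b₂ : ‖∑ j ∈ Finset.range n₂, (f (n₁ + 1 + j) - φ (shift^[j] ξ₂))‖
        ≤ C * (2 * (1 - δ)⁻¹) := by
      calc ‖∑ j ∈ Finset.range n₂, (f (n₁ + 1 + j) - φ (shift^[j] ξ₂))‖
          ≤ ∑ j ∈ Finset.range n₂, ‖f (n₁ + 1 + j) - φ (shift^[j] ξ₂)‖ := norm_sum_le _ _
        _ ≤ ∑ j ∈ Finset.range n₂, C * (δ ^ j + δ ^ (n₂ - 1 - j)) :=
            Finset.sum_le_sum fun j hj => hblock₂ j (Finset.mem_range.mp hj)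
        _ = C * ∑ j ∈ Finset.range n₂, (δ ^ j + δ ^ (n₂ - 1 - j)) := by rw [Finset.mul_sum]
        _ ≤ C * (2 * (1 - δ)⁻¹) := mul_le_mul_of_nonneg_left hgeom₂ hC.le
    have b₃ : ‖f n₁‖ ≤ R := hbdd _
    have b₄ : ‖f (n₁ + 1 + n₂)‖ ≤ R := hbdd _
    calc ‖(∑ i ∈ Finset.range n₁, (f i - φ (shift^[i] ξ₁)))
        + (∑ j ∈ Finset.range n₂, (f (n₁ + 1 + j) - φ (shift^[j] ξ₂)))
        + f n₁ + f (n₁ + 1 + n₂)‖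
        ≤ ‖(∑ i ∈ Finset.range n₁, (f i - φ (shift^[i] ξ₁)))
            + (∑ j ∈ Finset.range n₂, (f (n₁ + 1 + j) - φ (shift^[j] ξ₂)))
            + f n₁‖ + ‖f (n₁ + 1 + n₂)‖ := norm_add_le _ _
      _ ≤ ‖(∑ i ∈ Finset.range n₁, (f i - φ (shift^[i] ξ₁)))
            + (∑ j ∈ Finset.range n₂, (f (n₁ + 1 + j) - φ (shift^[j] ξ₂)))‖
            + ‖f n₁‖ + ‖f (n₁ + 1 + n₂)‖ := by
          have := norm_add_le ((∑ i ∈ Finset.range n₁, (f i - φ (shift^[i] ξ₁)))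
            + (∑ j ∈ Finset.range n₂, (f (n₁ + 1 + j) - φ (shift^[j] ξ₂)))) (f n₁)
          linarith
      _ ≤ ‖∑ i ∈ Finset.range n₁, (f i - φ (shift^[i] ξ₁))‖
            + ‖∑ j ∈ Finset.range n₂, (f (n₁ + 1 + j) - φ (shift^[j] ξ₂))‖
            + ‖f n₁‖ + ‖f (n₁ + 1 + n₂)‖ := by
          have := norm_add_le (∑ i ∈ Finset.range n₁, (f i - φ (shift^[i] ξ₁)))
            (∑ j ∈ Finset.range n₂, (f (n₁ + 1 + j) - φ (shift^[j] ξ₂)))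
          linarith
      _ ≤ C * (2 * (1 - δ)⁻¹) + C * (2 * (1 - δ)⁻¹) + R + R := by linarith
      _ = K := by rw [hK]; ring
  obtain ⟨E, hSeq, hEn⟩ : ∃ E, S = (n₁:ℝ) • A₁ + (n₂:ℝ) • A₂ + E ∧ ‖E‖ ≤ K :=
    ⟨S - T₁ - T₂, by rw [hA₁T, hA₂T]; abel, hEnorm⟩
  -- key decomposition
  have hkey : (P:ℝ)⁻¹ • S - (((p:ℝ)/(p + q)) • ρ₁ + ((q:ℝ)/(p + q)) • ρ₂)
      = ((n₁:ℝ)/P) • (A₁ - ρ₁) + ((n₂:ℝ)/P) • (A₂ - ρ₂)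
        + ((n₁:ℝ)/P - (p:ℝ)/(p + q)) • ρ₁ + ((n₂:ℝ)/P - (q:ℝ)/(p + q)) • ρ₂
        + (P:ℝ)⁻¹ • E := by
    rw [hSeq]
    module
  -- individual bounds
  have hAd₁ : ‖A₁ - ρ₁‖ ≤ ε / 8 := by
    have := hM₁ n₁ (by omega)
    rw [dist_eq_norm] at this
    exact this.le
  have hAd₂ : ‖A₂ - ρ₂‖ ≤ ε / 8 := by
    have := hM₂ n₂ (by omega)
    rw [dist_eq_norm] at this
    exact this.le
  have hfrac₁ : (0:ℝ) ≤ (n₁:ℝ)/P := by positivity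
  have hfrac₁' : (n₁:ℝ)/P ≤ 1 := by
    rw [div_le_one hPr]
    exact_mod_cast (by omega : n₁ ≤ P)
  have hfrac₂' : (n₂:ℝ)/P ≤ 1 := by
    rw [div_le_one hPr]
    exact_mod_cast (by omega : n₂ ≤ P)
  have hn₁r : (n₁:ℝ) = (p:ℝ) * M := by exact_mod_cast hn₁def
  have hn₂r : (n₂:ℝ) = (q:ℝ) * M := by exact_mod_cast hn₂def
  have hPrr : (P:ℝ) = (p:ℝ) * M + (q:ℝ) * M + 2 := by
    rw [hPdef]; push_cast [hn₁def, hn₂def]; ring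
  have hco₁ : |(n₁:ℝ)/P - (p:ℝ)/(p + q)| ≤ 2 / P := by
    have e : (n₁:ℝ)/P - (p:ℝ)/(p + q) = -(2 * p) / ((P:ℝ) * ((p:ℝ) + q)) := by
      rw [hn₁r, hPrr]
      field_simp
      ring
    rw [e, abs_div, abs_neg, abs_of_nonneg (by positivity : (0:ℝ) ≤ 2 * p),
      abs_of_pos (by positivity : (0:ℝ) < (P:ℝ) * ((p:ℝ) + q)),
      div_le_div_iff₀ (by positivity) hPr]
    have hple : (p:ℝ) ≤ (p:ℝ) + q := by
      have : (0:ℝ) ≤ (q:ℝ) := Nat.cast_nonneg q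
      linarith
    nlinarith [mul_le_mul_of_nonneg_left hple hPr.le]
  have hco₂ : |(n₂:ℝ)/P - (q:ℝ)/(p + q)| ≤ 2 / P := by
    have e : (n₂:ℝ)/P - (q:ℝ)/(p + q) = -(2 * q) / ((P:ℝ) * ((p:ℝ) + q)) := by
      rw [hn₂r, hPrr]
      field_simp
      ring
    rw [e, abs_div, abs_neg, abs_of_nonneg (by positivity : (0:ℝ) ≤ 2 * q),
      abs_of_pos (by positivity : (0:ℝ) < (P:ℝ) * ((p:ℝ) + q)),
      div_le_div_iff₀ (by positivity) hPr]
    have hqle : (q:ℝ) ≤ (p:ℝ) + q := by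
      have : (0:ℝ) ≤ (p:ℝ) := Nat.cast_nonneg p
      linarith
    nlinarith [mul_le_mul_of_nonneg_left hqle hPr.le]
  have hρ₁R : ‖ρ₁‖ ≤ R := norm_rotvec_le φ R hbdd ξ₁ ρ₁ h₁
  have hρ₂R : ‖ρ₂‖ ≤ R := norm_rotvec_le φ R hbdd ξ₂ ρ₂ h₂
  have hnorm : ‖(P:ℝ)⁻¹ • S - (((p:ℝ)/(p + q)) • ρ₁ + ((q:ℝ)/(p + q)) • ρ₂)‖
      ≤ ε / 4 + (4 * R + K) / P := by
    rw [hkey]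
    have t₁b : ‖((n₁:ℝ)/P) • (A₁ - ρ₁)‖ ≤ ε / 8 := by
      rw [norm_smul, Real.norm_eq_abs, abs_of_nonneg hfrac₁]
      calc (n₁:ℝ)/P * ‖A₁ - ρ₁‖ ≤ 1 * (ε / 8) :=
          mul_le_mul hfrac₁' hAd₁ (norm_nonneg _) zero_le_one
        _ = ε / 8 := one_mul _
    have t₂b : ‖((n₂:ℝ)/P) • (A₂ - ρ₂)‖ ≤ ε / 8 := by
      rw [norm_smul, Real.norm_eq_abs, abs_of_nonneg (by positivity)]
      calc (n₂:ℝ)/P * ‖A₂ - ρ₂‖ ≤ 1 * (ε / 8) :=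
          mul_le_mul hfrac₂' hAd₂ (norm_nonneg _) zero_le_one
        _ = ε / 8 := one_mul _
    have t₃b : ‖((n₁:ℝ)/P - (p:ℝ)/(p + q)) • ρ₁‖ ≤ 2 / P * R := by
      rw [norm_smul, Real.norm_eq_abs]
      exact mul_le_mul hco₁ hρ₁R (norm_nonneg _) (by positivity)
    have t₄b : ‖((n₂:ℝ)/P - (q:ℝ)/(p + q)) • ρ₂‖ ≤ 2 / P * R := by
      rw [norm_smul, Real.norm_eq_abs]
      exact mul_le_mul hco₂ hρ₂R (norm_nonneg _) (by positivity)
    have t₅b : ‖(P:ℝ)⁻¹ • E‖ ≤ K / P := by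
      rw [norm_smul, Real.norm_eq_abs, abs_of_pos (inv_pos.2 hPr)]
      rw [div_eq_inv_mul]
      exact mul_le_mul_of_nonneg_left hEn (by positivity)
    have c₁ := norm_add_le (((n₁:ℝ)/P) • (A₁ - ρ₁) + ((n₂:ℝ)/P) • (A₂ - ρ₂)
        + ((n₁:ℝ)/P - (p:ℝ)/(p + q)) • ρ₁ + ((n₂:ℝ)/P - (q:ℝ)/(p + q)) • ρ₂) ((P:ℝ)⁻¹ • E)
    have c₂ := norm_add_le (((n₁:ℝ)/P) • (A₁ - ρ₁) + ((n₂:ℝ)/P) • (A₂ - ρ₂)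
        + ((n₁:ℝ)/P - (p:ℝ)/(p + q)) • ρ₁) (((n₂:ℝ)/P - (q:ℝ)/(p + q)) • ρ₂)
    have c₃ := norm_add_le (((n₁:ℝ)/P) • (A₁ - ρ₁) + ((n₂:ℝ)/P) • (A₂ - ρ₂))
        (((n₁:ℝ)/P - (p:ℝ)/(p + q)) • ρ₁)
    have c₄ := norm_add_le (((n₁:ℝ)/P) • (A₁ - ρ₁)) (((n₂:ℝ)/P) • (A₂ - ρ₂))
    have : 2 / (P:ℝ) * R + 2 / (P:ℝ) * R + K / P = (4 * R + K) / P := by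
      field_simp
      ring
    linarith
  have hPbig : (4 * R + K) / P ≤ ε / 8 := by
    have h8 : (4 * R + K) * 8 / ε ≤ (M₃:ℝ) := Nat.le_ceil _
    have hMP : (M₃:ℝ) ≤ (P:ℝ) := by exact_mod_cast (by omega : M₃ ≤ P)
    rw [div_le_iff₀ hPr]
    have e : 4 * R + K = ε / 8 * ((4 * R + K) * 8 / ε) := by
      field_simp
    rw [e]
    calc ε / 8 * ((4 * R + K) * 8 / ε) ≤ ε / 8 * P :=
        mul_le_mul_of_nonneg_left (le_trans h8 hMP) (by linarith)
      _ = ε / 8 * P := rfl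
  rw [dist_eq_norm, ← norm_neg]
  have : -((((p:ℝ)/(p + q)) • ρ₁ + ((q:ℝ)/(p + q)) • ρ₂) - (P:ℝ)⁻¹ • S)
      = (P:ℝ)⁻¹ • S - (((p:ℝ)/(p + q)) • ρ₁ + ((q:ℝ)/(p + q)) • ρ₂) := by abel
  rw [this]
  calc ‖(P:ℝ)⁻¹ • S - (((p:ℝ)/(p + q)) • ρ₁ + ((q:ℝ)/(p + q)) • ρ₂)‖
      ≤ ε / 4 + (4 * R + K) / P := hnorm
    _ ≤ ε / 4 + ε / 8 := by linarith
    _ < ε := by linarith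

/-- the closure of the pointwise rotation set `J_φ` is convex. -/
theorem closure_pointwise_rotation_set_convex (s N : ℕ) (hs : 3 ≤ s) (hN : 1 ≤ N)
    (φ : SymbSpace s → EuclideanSpace ℝ (Fin N))
    (R : ℝ) (hR : 0 < R) (hbdd : ∀ ξ, ‖φ ξ‖ ≤ R) (hloc : ExpLocDet φ) :
    Convex ℝ (closure (PointwiseRot φ)) := by
  intro x hx y hy a b ha hb hab
  have hstep : ∀ u ∈ PointwiseRot φ, ∀ v ∈ PointwiseRot φ,
      a • u + b • v ∈ closure (PointwiseRot φ) := by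
    rintro u ⟨ξu, hξu⟩ v ⟨ξv, hξv⟩
    have ha1 : a ≤ 1 := by linarith
    set pseq : ℕ → ℕ := fun n => ⌊a * n⌋₊ + 1 with hpseq
    set qseq : ℕ → ℕ := fun n => n + 2 - pseq n with hqseq
    have hple : ∀ n, pseq n ≤ n + 1 := by
      intro n
      have h1 : a * n ≤ (n:ℝ) := by nlinarith [Nat.cast_nonneg (α := ℝ) n]
      have h2 : ⌊a * (n:ℝ)⌋₊ ≤ n := by
        calc ⌊a * (n:ℝ)⌋₊ ≤ ⌊(n:ℝ)⌋₊ := Nat.floor_le_floor h1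
          _ = n := Nat.floor_natCast n
      simp only [hpseq]
      omega
    have hp1 : ∀ n, 1 ≤ pseq n := fun n => by simp [hpseq]
    have hq1 : ∀ n, 1 ≤ qseq n := by
      intro n
      have := hple n
      simp only [hqseq]
      omega
    have hsum : ∀ n, pseq n + qseq n = n + 2 := by
      intro n
      have := hple n
      simp only [hqseq]
      omega
    set tseq : ℕ → ℝ := fun n => (pseq n : ℝ) / ((n:ℝ) + 2) with htseq
    have hco : ∀ n, ((pseq n : ℝ) + (qseq n : ℝ)) = (n:ℝ) + 2 := by
      intro n
      exact_mod_cast congrArg (Nat.cast : ℕ → ℝ) (hsum n)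
    have hqr : ∀ n, (qseq n : ℝ) = (n:ℝ) + 2 - pseq n := by
      intro n
      have := hco n
      linarith
    have hcombo : ∀ n, tseq n • u + (1 - tseq n) • v ∈ closure (PointwiseRot φ) := by
      intro n
      have h := combo_mem_closure hs φ R hR hbdd hloc ξu ξv u v hξu hξv
        (pseq n) (qseq n) (hp1 n) (hq1 n)
      have e1 : ((pseq n : ℝ)) / ((pseq n : ℝ) + (qseq n : ℝ)) = tseq n := by
        rw [hco n]
      have e2 : ((qseq n : ℝ)) / ((pseq n : ℝ) + (qseq n : ℝ)) = 1 - tseq n := by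
        rw [hco n, htseq, hqr n]
        have hn2 : ((n:ℝ) + 2) ≠ 0 := by positivity
        field_simp
      rw [e1, e2] at h
      exact h
    have htt : Tendsto tseq atTop (nhds a) := by
      have hgt : Tendsto (fun n : ℕ => 4 / ((n:ℝ) + 2)) atTop (nhds 0) := by
        apply squeeze_zero' (g := fun n : ℕ => 4 / (n:ℝ))
        · filter_upwards with n; positivity
        · filter_upwards [eventually_ge_atTop 1] with n hn
          have hn0 : (0:ℝ) < n := by exact_mod_cast hn
          apply div_le_div_of_nonneg_left (by norm_num) hn0
          linarith
        · exact tendsto_const_div_atTop_nhds_zero_nat 4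
      have hbnd : ∀ n : ℕ, ‖tseq n - a‖ ≤ 4 / ((n:ℝ) + 2) := by
        intro n
        have hfl : (⌊a * (n:ℝ)⌋₊ : ℝ) ≤ a * n := Nat.floor_le (by positivity)
        have hfl2 : a * (n:ℝ) < (⌊a * (n:ℝ)⌋₊ : ℝ) + 1 := Nat.lt_floor_add_one _
        have hn2 : (0:ℝ) < (n:ℝ) + 2 := by positivity
        have e : tseq n - a = ((⌊a * (n:ℝ)⌋₊ : ℝ) + 1 - a * ((n:ℝ) + 2)) / ((n:ℝ) + 2) := by
          rw [htseq]
          show ((⌊a * (n:ℝ)⌋₊ : ℕ) + 1 : ℕ) / ((n:ℝ) + 2) - a = _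
          push_cast
          field_simp
        rw [Real.norm_eq_abs, e, abs_div, abs_of_pos hn2, div_le_div_iff₀ hn2 hn2]
        have habs : |(⌊a * (n:ℝ)⌋₊ : ℝ) + 1 - a * ((n:ℝ) + 2)| ≤ 4 := by
          rw [abs_le]
          constructor <;> nlinarith
        nlinarith [abs_nonneg ((⌊a * (n:ℝ)⌋₊ : ℝ) + 1 - a * ((n:ℝ) + 2))]
      have hzero : Tendsto (fun n : ℕ => tseq n - a) atTop (nhds 0) :=
        squeeze_zero_norm hbnd hgt
      have := hzero.add_const a
      simpa using this
    have hlim : Tendsto (fun n => tseq n • u + (1 - tseq n) • v) atTop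
        (nhds (a • u + (1 - a) • v)) :=
      (htt.smul_const u).add ((tendsto_const_nhds.sub htt).smul_const v)
    have hmem : a • u + (1 - a) • v ∈ closure (PointwiseRot φ) :=
      isClosed_closure.mem_of_tendsto hlim (Filter.Eventually.of_forall hcombo)
    rw [show b = 1 - a by linarith]
    exact hmem
  have hcont : Continuous (Function.uncurry fun u v : EuclideanSpace ℝ (Fin N) =>
      a • u + b • v) := by
    apply Continuous.add
    · exact (continuous_fst).const_smul a
    · exact (continuous_snd).const_smul b
  have h := map_mem_closure₂ (f := fun u v : EuclideanSpace ℝ (Fin N) => a • u + b • v)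
    hcont hx hy hstep
  rwa [closure_closure] at h
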